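/- Universal dilation theorem: for every finite state space E there exist a finite set G, a bijection φ : E × G → E × G, and for every sequence of stochastic matrices (P(t))_{t≥1} on E a sequence of probability measures (q(t))_{t≥1} on G, such that for all t, i, j: P(t)_{ij} = ∑_{g∈G} q_g(t) · δ_{φ^E(i,g),j}, where φ^E is the E-component of φ. Consequently the process Xₜ = φ^E(X_{t-1}, Yₜ), with (Yₜ) independent with laws q(t) and X₀ = k, is a Markov chain with transition matrices (P(t)) for every k, and G and φ do not depend on the sequence (P(t)). -/

import Mathlib

open MeasureTheory Finset

/-- The process `Xₜ` on `Ω = E × G^ℕ`: `X₀(i,(gₙ)) = i`, `Xₜ = φ^E(X_{t-1}, Yₜ)`. -/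
def dilX {E G : Type} (φE : E → G → E) : ℕ → (E × (ℕ → G)) → E
  | 0, ω => ω.1
  | t + 1, ω => φE (dilX φE t ω) (ω.2 (t + 1))

/-- The filtration `𝓕ₜ = σ(X₀, Y₁, …, Yₜ)` on `Ω = E × G^ℕ`. -/
def dilFilt (E G : Type) [MeasurableSpace E] [MeasurableSpace G] (t : ℕ) :
    MeasurableSpace (E × (ℕ → G)) :=
  MeasurableSpace.comap (fun ω : E × (ℕ → G) => ω.1) inferInstance ⊔
    ⨆ s ∈ Finset.Icc 1 t,
      MeasurableSpace.comap (fun ω : E × (ℕ → G) => ω.2 s) inferInstance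

section Helpers
variable {E G : Type}

lemma dilX_congr (φE : E → G → E) : ∀ (t : ℕ) (ω ω' : E × (ℕ → G)),
    ω.1 = ω'.1 → (∀ s ∈ Finset.Icc 1 t, ω.2 s = ω'.2 s) → dilX φE t ω = dilX φE t ω'
  | 0, ω, ω', h1, _ => h1
  | t + 1, ω, ω', h1, h2 => by
    have ht : dilX φE t ω = dilX φE t ω' :=
      dilX_congr φE t ω ω' h1 fun s hs => h2 s (Finset.Icc_subset_Icc_right (Nat.le_succ t) hs)
    have he : ω.2 (t+1) = ω'.2 (t+1) := h2 (t+1) (by simp)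
    simp only [dilX, ht, he]

variable [MeasurableSpace E] [MeasurableSpace G]

lemma dilFilt_mono {t t' : ℕ} (h : t ≤ t') : dilFilt E G t ≤ dilFilt E G t' := by
  refine sup_le_sup_left ?_ _
  exact iSup_le fun s => iSup_le fun hs =>
    le_iSup₂ (f := fun s (_ : s ∈ Finset.Icc 1 t') =>
      MeasurableSpace.comap (fun ω : E × (ℕ → G) => ω.2 s) inferInstance) s
      (Finset.Icc_subset_Icc_right h hs)

lemma dilFilt_le (t : ℕ) : dilFilt E G t ≤ Prod.instMeasurableSpace := by
  refine sup_le (Measurable.comap_le measurable_fst) ?_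
  exact iSup₂_le fun s _ =>
    Measurable.comap_le ((measurable_pi_apply s).comp measurable_snd)

lemma measurableSet_fst_eq {t : ℕ} (hE : ∀ s : Set E, MeasurableSet s) (k : E) :
    MeasurableSet[dilFilt E G t] {ω : E × (ℕ → G) | ω.1 = k} := by
  refine le_sup_left (α := MeasurableSpace (E × (ℕ → G))) _ ?_
  exact ⟨{k}, hE _, rfl⟩

lemma measurableSet_snd_eq {t : ℕ} (hG : ∀ s : Set G, MeasurableSet s) {s : ℕ}
    (hs : s ∈ Finset.Icc 1 t) (g : G) :
    MeasurableSet[dilFilt E G t] {ω : E × (ℕ → G) | ω.2 s = g} := by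
  refine le_sup_right (α := MeasurableSpace (E × (ℕ → G))) _ ?_
  have : MeasurableSet[MeasurableSpace.comap (fun ω : E × (ℕ → G) => ω.2 s) inferInstance]
      {ω : E × (ℕ → G) | ω.2 s = g} := ⟨{g}, hG _, rfl⟩
  exact (le_iSup₂ (f := fun s (_ : s ∈ Finset.Icc 1 t) =>
    MeasurableSpace.comap (fun ω : E × (ℕ → G) => ω.2 s) inferInstance) s hs) _ this

lemma measurable_dilX [Fintype E] [Fintype G] (hE : ∀ s : Set E, MeasurableSet s)
    (hG : ∀ s : Set G, MeasurableSet s) (φE : E → G → E) :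
    ∀ t : ℕ, Measurable[dilFilt E G t] (dilX φE t)
  | 0 => by
    intro s _
    have : dilX φE 0 ⁻¹' s = (fun ω : E × (ℕ → G) => ω.1) ⁻¹' s := rfl
    rw [this]
    exact le_sup_left (α := MeasurableSpace (E × (ℕ → G))) _ ⟨s, hE _, rfl⟩
  | t + 1 => by
    have ih := measurable_dilX hE hG φE t
    refine @measurable_to_countable' E (E × (ℕ → G)) _ _ (dilFilt E G (t+1)) _ fun j => ?_
    have : dilX φE (t+1) ⁻¹' {j} =
        ⋃ (p : E × G) (_ : φE p.1 p.2 = j),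
          (dilX φE t ⁻¹' {p.1} ∩ {ω : E × (ℕ → G) | ω.2 (t+1) = p.2}) := by
      ext ω
      simp only [Set.mem_preimage, Set.mem_singleton_iff, Set.mem_iUnion, Set.mem_inter_iff,
        Set.mem_setOf_eq]
      constructor
      · intro h
        exact ⟨(dilX φE t ω, ω.2 (t+1)), h, rfl, rfl⟩
      · rintro ⟨⟨x, g⟩, hj, hx, hg⟩
        simp only [dilX]
        rw [hx, hg]; exact hj
    rw [this]
    refine MeasurableSet.iUnion fun p => MeasurableSet.iUnion fun _ => ?_
    refine MeasurableSet.inter ?_ ?_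
    · exact dilFilt_mono (Nat.le_succ t) _ (ih (hE {p.1}))
    · exact measurableSet_snd_eq hG (by simp) p.2

end Helpers

section Cells
variable {E G : Type} [MeasurableSpace E] [MeasurableSpace G]

/-- projection onto coordinates `(ω.1, ω.2|_{[1,t]})` -/
def dilProj (E G : Type) (t : ℕ) (ω : E × (ℕ → G)) : E × ((Finset.Icc 1 t : Finset ℕ) → G) :=
  (ω.1, fun s => ω.2 s.1)

lemma dilFilt_le_comap (t : ℕ) :
    dilFilt E G t ≤ MeasurableSpace.comap (dilProj E G t) ⊤ := by
  refine sup_le ?_ (iSup₂_le fun s hs => ?_)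
  · have : (fun ω : E × (ℕ → G) => ω.1) = (fun d : E × ((Finset.Icc 1 t : Finset ℕ) → G) => d.1) ∘ dilProj E G t := rfl
    rw [this, ← MeasurableSpace.comap_comp]
    exact MeasurableSpace.comap_mono le_top
  · have : (fun ω : E × (ℕ → G) => ω.2 s)
        = (fun d : E × ((Finset.Icc 1 t : Finset ℕ) → G) => d.2 ⟨s, hs⟩) ∘ dilProj E G t := rfl
    rw [this, ← MeasurableSpace.comap_comp]
    exact MeasurableSpace.comap_mono le_top

lemma exists_preimage {t : ℕ} {s : Set (E × (ℕ → G))}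
    (hs : MeasurableSet[dilFilt E G t] s) :
    ∃ S : Set (E × ((Finset.Icc 1 t : Finset ℕ) → G)), dilProj E G t ⁻¹' S = s := by
  obtain ⟨S, -, hS⟩ := MeasurableSpace.measurableSet_comap.mp (dilFilt_le_comap t s hs)
  exact ⟨S, hS⟩

lemma cell_eq [Nonempty G] {t : ℕ} (d : E × ((Finset.Icc 1 t : Finset ℕ) → G)) :
    dilProj E G t ⁻¹' {d} = {ω : E × (ℕ → G) | ω.1 = d.1 ∧ ∀ s ∈ Finset.Icc 1 t,
      ω.2 s = (fun n => if h : n ∈ Finset.Icc 1 t then d.2 ⟨n, h⟩ else Classical.arbitrary G) s} := by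
  ext ω
  simp only [Set.mem_preimage, Set.mem_singleton_iff, Set.mem_setOf_eq, dilProj, Prod.ext_iff,
    funext_iff]
  constructor
  · rintro ⟨h1, h2⟩
    exact ⟨h1, fun s hs => by rw [dif_pos hs]; exact h2 ⟨s, hs⟩⟩
  · rintro ⟨h1, h2⟩
    refine ⟨h1, fun s => ?_⟩
    have := h2 s.1 s.2
    rwa [dif_pos s.2] at this

lemma cylinder_meas (hE : ∀ s : Set E, MeasurableSet s) (hG : ∀ s : Set G, MeasurableSet s)
    (t : ℕ) (k : E) (γ : ℕ → G) :
    MeasurableSet {ω : E × (ℕ → G) | ω.1 = k ∧ ∀ s ∈ Finset.Icc 1 t, ω.2 s = γ s} := by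
  have : {ω : E × (ℕ → G) | ω.1 = k ∧ ∀ s ∈ Finset.Icc 1 t, ω.2 s = γ s}
      = {ω : E × (ℕ → G) | ω.1 = k} ∩ ⋂ (s : ℕ) (_ : s ∈ Finset.Icc 1 t),
          {ω : E × (ℕ → G) | ω.2 s = γ s} := by
    ext ω; simp [Set.mem_iInter]
  rw [this]
  refine MeasurableSet.inter ?_ ?_
  · show MeasurableSet ((fun ω : E × (ℕ → G) => ω.1) ⁻¹' {k})
    exact measurable_fst (hE {k})
  · refine MeasurableSet.iInter fun s => MeasurableSet.iInter fun _ => ?_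
    show MeasurableSet ((fun ω : E × (ℕ → G) => ω.2 s) ⁻¹' {γ s})
    exact ((measurable_pi_apply s).comp measurable_snd) (hG {γ s})

lemma cell_meas (hE : ∀ s : Set E, MeasurableSet s) (hG : ∀ s : Set G, MeasurableSet s)
    [Nonempty G] {t : ℕ} (d : E × ((Finset.Icc 1 t : Finset ℕ) → G)) :
    MeasurableSet[dilFilt E G t] (dilProj E G t ⁻¹' {d}) := by
  rw [cell_eq]
  have h1 := measurableSet_fst_eq (G := G) (t := t) hE d.1
  have h2 : ∀ (s : ℕ) (hs : s ∈ Finset.Icc 1 t), MeasurableSet[dilFilt E G t]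
      {ω : E × (ℕ → G) | ω.2 s = (fun n => if h : n ∈ Finset.Icc 1 t then d.2 ⟨n, h⟩
        else Classical.arbitrary G) s} := fun s hs => measurableSet_snd_eq hG hs _
  have : {ω : E × (ℕ → G) | ω.1 = d.1 ∧ ∀ s ∈ Finset.Icc 1 t,
      ω.2 s = (fun n => if h : n ∈ Finset.Icc 1 t then d.2 ⟨n, h⟩ else Classical.arbitrary G) s}
      = {ω : E × (ℕ → G) | ω.1 = d.1} ∩ ⋂ (s : ℕ) (hs : s ∈ Finset.Icc 1 t),
        {ω : E × (ℕ → G) | ω.2 s = (fun n => if h : n ∈ Finset.Icc 1 t then d.2 ⟨n, h⟩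
          else Classical.arbitrary G) s} := by
    ext ω; simp [Set.mem_iInter]
  rw [this]
  exact h1.inter (MeasurableSet.iInter fun s => MeasurableSet.iInter fun hs => h2 s hs)

end Cells

/-- The Markov chain clause: whenever `X₀ = k` and the inputs `(Yₜ)` are independent with laws
`q(t)` — i.e. `μ = δ_k ⊗ (⊗_t q(t))`, characterized by its values on cylinders — the process
`Xₜ = φ^E(X_{t-1}, Yₜ)` is a Markov chain with transition matrices
`P(t)_{ij} = ∑_g q_g(t) δ_{φ^E(i,g),j}`. -/
def MarkovDilationClause (E G : Type) [Fintype E] [Fintype G] [DecidableEq E]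
    (φE : E → G → E) (q : ℕ → G → ℝ) : Prop :=
  letI : MeasurableSpace E := ⊤
  letI : MeasurableSpace G := ⊤
  ∀ (k : E) (μ : Measure (E × (ℕ → G))), IsProbabilityMeasure μ →
    (∀ (t : ℕ) (k' : E) (γ : ℕ → G),
      μ {ω | ω.1 = k' ∧ ∀ s ∈ Finset.Icc 1 t, ω.2 s = γ s}
        = (if k' = k then 1 else 0) * ∏ s ∈ Finset.Icc 1 t, ENNReal.ofReal (q s (γ s))) →
    μ {ω | dilX φE 0 ω = k} = 1 ∧
    ∀ (t : ℕ) (j : E),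
      μ[Set.indicator {ω | dilX φE (t + 1) ω = j} (fun _ => (1 : ℝ)) | dilFilt E G t]
        =ᵐ[μ] fun ω => ∑ g : G, q (t + 1) g * (if φE (dilX φE t ω) g = j then 1 else 0)

/-- The body of the universal dilation statement, for a fixed environment `(G, φ)`: every
sequence of stochastic matrices `(P(t))` on `E` is realized by a suitable sequence of
probability distributions `(q(t))` on `G`, via `P(t)_{ij} = ∑_g q_g(t) δ_{φ^E(i,g),j}`. -/
def UniversalDilationBody (E G : Type) [Fintype E] [Fintype G] [DecidableEq E]
    (φ : E × G ≃ E × G) : Prop :=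
  ∀ P : ℕ → Matrix E E ℝ,
    (∀ t i j, 0 ≤ P t i j) → (∀ t i, ∑ j, P t i j = 1) →
    ∃ q : ℕ → G → ℝ,
      (∀ t g, 0 ≤ q t g) ∧ (∀ t, ∑ g, q t g = 1) ∧
      (∀ t i j, P t i j = ∑ g, q t g * (if (φ (i, g)).1 = j then 1 else 0)) ∧
      MarkovDilationClause E G (fun i g => (φ (i, g)).1) q

/-- universal dilation theorem: for every finite state space `E` there exist a
finite set `G` and a bijection `φ : E × G ≃ E × G`, both independent of the Markov evolution,
such that every sequence of stochastic matrices `(P(t))` on `E` is obtained from suitable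
distributions `(q(t))` on `G` by `P(t)_{ij} = ∑_g q_g(t) δ_{φ^E(i,g),j}`; consequently the
process `Xₜ = φ^E(X_{t-1}, Yₜ)`, with `(Yₜ)` independent with laws `q(t)` and `X₀ = k`, is a
Markov chain with transition matrices `(P(t))` for every `k`. -/
-- sum over all functions of product of row entries, restricted to f i = j, equals P i j
lemma marginal_sum {E : Type} [Fintype E] [DecidableEq E] (P : Matrix E E ℝ)
    (hrow : ∀ i, ∑ j, P i j = 1) (i j : E) :
    ∑ f : E → E, (∏ i', P i' (f i')) * (if f i = j then (1:ℝ) else 0) = P i j := by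
  classical
  have key := Finset.prod_univ_sum (fun _ : E => (univ : Finset E))
    (fun i' x => if i' = i then P i x * (if x = j then (1:ℝ) else 0) else P i' x)
  rw [Fintype.piFinset_univ] at key
  have lhs_eq : ∀ f : E → E,
      (∏ i', if i' = i then P i (f i') * (if f i' = j then (1:ℝ) else 0) else P i' (f i'))
        = (∏ i', P i' (f i')) * (if f i = j then (1:ℝ) else 0) := by
    intro f
    rw [← Finset.prod_erase_mul univ _ (mem_univ i), ← Finset.prod_erase_mul univ _ (mem_univ i)]
    rw [if_pos rfl]
    rw [Finset.prod_congr rfl (fun x hx => if_neg (Finset.ne_of_mem_erase hx))]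
    ring
  have rhs_eq :
      (∏ i', ∑ x, if i' = i then P i x * (if x = j then (1:ℝ) else 0) else P i' x) = P i j := by
    rw [← Finset.prod_erase_mul univ _ (mem_univ i)]
    have h1 : (∑ x, if i = i then P i x * (if x = j then (1:ℝ) else 0) else P i x) = P i j := by
      simp [mul_ite]
    rw [h1]
    have h2 : ∀ x ∈ univ.erase i,
        (∑ y, if x = i then P i y * (if y = j then (1:ℝ) else 0) else P x y) = 1 := by
      intro x hx
      simp only [if_neg (Finset.ne_of_mem_erase hx)]
      exact hrow x
    rw [Finset.prod_congr rfl h2]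
    simp
  rw [rhs_eq] at key
  rw [key]
  exact (Finset.sum_congr rfl fun f _ => (lhs_eq f)).symm

lemma sum_prod_one {E : Type} [Fintype E] [DecidableEq E] (P : Matrix E E ℝ)
    (hrow : ∀ i, ∑ j, P i j = 1) :
    ∑ f : E → E, (∏ i', P i' (f i')) = 1 := by
  classical
  have key := Finset.prod_univ_sum (fun _ : E => (univ : Finset E)) (fun i' x => P i' x)
  rw [Fintype.piFinset_univ] at key
  rw [← key]
  simp [hrow]

def dilEquiv (E : Type) [DecidableEq E] : E × (E × (E → E)) ≃ E × (E × (E → E)) where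
  toFun p := (p.2.2 p.1, (p.1, Function.update p.2.2 p.1 p.2.1))
  invFun p := (p.2.1, (p.2.2 p.2.1, Function.update p.2.2 p.2.1 p.1))
  left_inv := by
    rintro ⟨i, e, f⟩
    simp [Function.update_self, Function.update_idem, Function.update_eq_self]
  right_inv := by
    rintro ⟨j, i, h⟩
    simp [Function.update_self, Function.update_idem, Function.update_eq_self]

theorem clause_aux {E G : Type} [Fintype E] [Fintype G] [DecidableEq E] [Nonempty G]
    (φE : E → G → E) (q : ℕ → G → ℝ) (hq0 : ∀ t g, 0 ≤ q t g) :
    MarkovDilationClause E G φE q := by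
  letI : MeasurableSpace E := ⊤
  letI : MeasurableSpace G := ⊤
  have hE : ∀ s : Set E, MeasurableSet s := fun _ => MeasurableSpace.measurableSet_top
  have hG : ∀ s : Set G, MeasurableSet s := fun _ => MeasurableSpace.measurableSet_top
  intro k μ hprob hcyl
  constructor
  · have h0 := hcyl 0 k (fun _ => Classical.arbitrary G)
    simp only [Finset.Icc_eq_empty_of_lt (by norm_num : (0:ℕ) < 1), Finset.notMem_empty,
      false_implies, implies_true, and_true, Finset.prod_empty, mul_one, if_pos rfl] at h0
    exact h0
  · intro t j
    have hm : dilFilt E G t ≤ Prod.instMeasurableSpace := dilFilt_le t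
    haveI : SigmaFinite (μ.trim hm) := inferInstance
    -- the target set A
    set A : Set (E × (ℕ → G)) := {ω | dilX φE (t + 1) ω = j} with hAdef
    have hdXm : ∀ T : ℕ, Measurable (dilX φE T) := fun T =>
      (measurable_dilX hE hG φE T).mono (dilFilt_le T) le_rfl
    have hA : MeasurableSet A := by
      have : A = dilX φE (t+1) ⁻¹' {j} := rfl
      rw [this]; exact hdXm (t+1) (hE {j})
    have hf : Integrable (A.indicator fun _ => (1:ℝ)) μ := (integrable_const 1).indicator hA
    set g : (E × (ℕ → G)) → ℝ :=
      fun ω => ∑ gg : G, q (t + 1) gg * (if φE (dilX φE t ω) gg = j then (1:ℝ) else 0) with hgdef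
    have hgm' : Measurable[dilFilt E G t] g := by
      have h1 : Measurable[dilFilt E G t] (dilX φE t) := measurable_dilX hE hG φE t
      have h2 : Measurable (fun x : E => ∑ gg : G, q (t+1) gg * (if φE x gg = j then (1:ℝ) else 0)) :=
        fun s _ => hE _
      exact h2.comp h1
    have hgm : AEStronglyMeasurable[dilFilt E G t] g μ :=
      ⟨g, hgm'.stronglyMeasurable, Filter.EventuallyEq.rfl⟩
    have hgint : Integrable g μ := by
      have hgeq : g = fun ω => ∑ gg : G,
          Set.indicator {ω' : E × (ℕ → G) | φE (dilX φE t ω') gg = j}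
            (fun _ => q (t+1) gg) ω := by
        funext ω
        refine Finset.sum_congr rfl fun gg _ => ?_
        simp [Set.indicator_apply, mul_ite]
      rw [hgeq]
      refine integrable_finset_sum _ fun gg _ => (integrable_const _).indicator ?_
      have : {ω' : E × (ℕ → G) | φE (dilX φE t ω') gg = j}
          = dilX φE t ⁻¹' {x | φE x gg = j} := rfl
      rw [this]; exact hdXm t (hE _)
    -- per-cell integral identity
    have percell : ∀ d : E × ((Finset.Icc 1 t : Finset ℕ) → G),
        ∫ ω in dilProj E G t ⁻¹' {d}, g ω ∂μ
          = ∫ ω in dilProj E G t ⁻¹' {d}, A.indicator (fun _ => (1:ℝ)) ω ∂μ := by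
      rintro ⟨k', c⟩
      set γ : ℕ → G :=
        fun n => if h : n ∈ Finset.Icc 1 t then c ⟨n, h⟩ else Classical.arbitrary G with hγ
      have hcell : dilProj E G t ⁻¹' {(k', c)}
          = {ω : E × (ℕ → G) | ω.1 = k' ∧ ∀ s ∈ Finset.Icc 1 t, ω.2 s = γ s} := cell_eq _
      set x := dilX φE t (k', γ) with hxdef
      have hconst : ∀ ω ∈ dilProj E G t ⁻¹' {(k', c)}, dilX φE t ω = x := by
        intro ω hω; rw [hcell] at hω
        exact dilX_congr φE t ω (k', γ) hω.1 hω.2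
      have hcellmeas : MeasurableSet (dilProj E G t ⁻¹' {(k', c)}) :=
        hm _ (cell_meas hE hG _)
      -- LHS: constant on the cell
      have hL : ∫ ω in dilProj E G t ⁻¹' {(k', c)}, g ω ∂μ
          = (μ (dilProj E G t ⁻¹' {(k', c)})).toReal
            * ∑ gg : G, q (t + 1) gg * (if φE x gg = j then (1:ℝ) else 0) := by
        rw [setIntegral_congr_fun hcellmeas (g := fun _ =>
          ∑ gg : G, q (t + 1) gg * (if φE x gg = j then (1:ℝ) else 0))
          (fun ω hω => by simp only [hgdef, hconst ω hω])]
        rw [setIntegral_const, smul_eq_mul]; rfl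
      -- RHS: measure of the intersection
      have hR : ∫ ω in dilProj E G t ⁻¹' {(k', c)}, A.indicator (fun _ => (1:ℝ)) ω ∂μ
          = (μ (dilProj E G t ⁻¹' {(k', c)} ∩ A)).toReal := by
        rw [setIntegral_indicator hA, setIntegral_const, smul_eq_mul, mul_one]; rfl
      -- the cylinders at level t+1
      set cylg : G → Set (E × (ℕ → G)) := fun gg =>
        {ω : E × (ℕ → G) | ω.1 = k' ∧ ∀ s ∈ Finset.Icc 1 (t+1),
          ω.2 s = Function.update γ (t+1) gg s} with hcylg
      have hmemg : ∀ (gg : G) (ω : E × (ℕ → G)),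
          ω ∈ cylg gg ↔ (ω ∈ dilProj E G t ⁻¹' {(k', c)} ∧ ω.2 (t+1) = gg) := by
        intro gg ω
        rw [hcell, hcylg]
        simp only [Set.mem_setOf_eq]
        constructor
        · rintro ⟨h1, h2⟩
          have h3 : ω.2 (t+1) = gg := by
            have := h2 (t+1) (by simp)
            rwa [Function.update_self] at this
          refine ⟨⟨h1, fun s hs => ?_⟩, h3⟩
          have hsle : s ≤ t := (Finset.mem_Icc.mp hs).2
          have := h2 s (Finset.mem_Icc.mpr ⟨(Finset.mem_Icc.mp hs).1, hsle.trans (Nat.le_succ t)⟩)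
          rwa [Function.update_of_ne (by omega)] at this
        · rintro ⟨⟨h1, h2⟩, h3⟩
          refine ⟨h1, fun s hs => ?_⟩
          rcases eq_or_ne s (t+1) with rfl | hne
          · rw [Function.update_self]; exact h3
          · rw [Function.update_of_ne hne]
            have : s ∈ Finset.Icc 1 t := by
              rw [Finset.mem_Icc] at hs ⊢; omega
            exact h2 s this
      have hsplit : dilProj E G t ⁻¹' {(k', c)} ∩ A
          = ⋃ gg ∈ Finset.univ.filter (fun gg : G => φE x gg = j), cylg gg := by
        ext ω
        simp only [Set.mem_inter_iff, Set.mem_iUnion, Finset.mem_filter, Finset.mem_univ,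
          true_and, exists_prop]
        constructor
        · rintro ⟨hωc, hωA⟩
          have hdx : dilX φE (t+1) ω = φE (dilX φE t ω) (ω.2 (t+1)) := rfl
          have hj : φE x (ω.2 (t+1)) = j := by
            rw [← hconst ω hωc]
            rw [hAdef] at hωA
            exact hωA
          exact ⟨ω.2 (t+1), hj, (hmemg _ ω).mpr ⟨hωc, rfl⟩⟩
        · rintro ⟨gg, hj, hmem⟩
          obtain ⟨hωc, hg⟩ := (hmemg gg ω).mp hmem
          refine ⟨hωc, ?_⟩
          show dilX φE (t+1) ω = j
          have : dilX φE (t+1) ω = φE (dilX φE t ω) (ω.2 (t+1)) := rfl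
          rw [this, hconst ω hωc, hg]
          exact hj
      have hdisjg : Set.PairwiseDisjoint
          ↑(Finset.univ.filter (fun gg : G => φE x gg = j)) cylg := by
        intro g1 _ g2 _ hne
        refine Set.disjoint_left.mpr fun ω h1 h2 => hne ?_
        have e1 := ((hmemg g1 ω).mp h1).2
        have e2 := ((hmemg g2 ω).mp h2).2
        rw [← e1, e2]
      have hmeasg : ∀ gg ∈ Finset.univ.filter (fun gg : G => φE x gg = j),
          MeasurableSet (cylg gg) := fun gg _ => cylinder_meas hE hG (t+1) k' _
      have hmugg : ∀ gg : G, μ (cylg gg)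
          = ENNReal.ofReal (q (t+1) gg) * μ (dilProj E G t ⁻¹' {(k', c)}) := by
        intro gg
        have h1 := hcyl (t+1) k' (Function.update γ (t+1) gg)
        have h2 := hcyl t k' γ
        rw [← hcell] at h2
        have hins : Finset.Icc 1 (t+1) = insert (t+1) (Finset.Icc 1 t) :=
          (Finset.insert_Icc_right_eq_Icc_add_one (by omega)).symm
        rw [hins, Finset.prod_insert (by simp)] at h1
        rw [Function.update_self] at h1
        have hprodeq : ∏ s ∈ Finset.Icc 1 t,
            ENNReal.ofReal (q s (Function.update γ (t+1) gg s))
            = ∏ s ∈ Finset.Icc 1 t, ENNReal.ofReal (q s (γ s)) := by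
          refine Finset.prod_congr rfl fun s hs => ?_
          rw [Function.update_of_ne]
          have := (Finset.mem_Icc.mp hs).2; omega
        rw [hprodeq] at h1
        show μ (cylg gg) = _
        have hset : cylg gg = {ω : E × (ℕ → G) | ω.1 = k' ∧ ∀ s ∈ insert (t+1) (Finset.Icc 1 t),
            ω.2 s = Function.update γ (t+1) gg s} := by rw [hcylg, ← hins]
        rw [hset, h1, h2]
        ring
      have hmuA : μ (dilProj E G t ⁻¹' {(k', c)} ∩ A)
          = ∑ gg ∈ Finset.univ.filter (fun gg : G => φE x gg = j),
            ENNReal.ofReal (q (t+1) gg) * μ (dilProj E G t ⁻¹' {(k', c)}) := by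
        rw [hsplit, measure_biUnion_finset hdisjg hmeasg]
        exact Finset.sum_congr rfl fun gg _ => hmugg gg
      rw [hL, hR, hmuA]
      rw [ENNReal.toReal_sum (fun gg _ => ENNReal.mul_ne_top ENNReal.ofReal_ne_top
        (measure_ne_top μ _))]
      have : ∀ gg ∈ Finset.univ.filter (fun gg : G => φE x gg = j),
          (ENNReal.ofReal (q (t+1) gg) * μ (dilProj E G t ⁻¹' {(k', c)})).toReal
            = q (t+1) gg * (μ (dilProj E G t ⁻¹' {(k', c)})).toReal := by
        intro gg _
        rw [ENNReal.toReal_mul, ENNReal.toReal_ofReal (hq0 _ _)]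
      rw [Finset.sum_congr rfl this]
      rw [← Finset.sum_mul]
      rw [Finset.sum_filter]
      rw [mul_comm]
      congr 1
      exact Finset.sum_congr rfl fun gg _ => by simp [mul_ite]
    -- assemble via uniqueness of conditional expectation
    refine (ae_eq_condExp_of_forall_setIntegral_eq hm hf
      (fun s _ _ => hgint.integrableOn) ?_ hgm).symm
    intro s hs _
    obtain ⟨S, rfl⟩ := exists_preimage hs
    haveI : Fintype ↥S := Fintype.ofFinite _
    have hdecomp : dilProj E G t ⁻¹' S = ⋃ d ∈ S.toFinite.toFinset, dilProj E G t ⁻¹' {d} := by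
      ext ω
      simp only [Set.mem_iUnion, Set.Finite.mem_toFinset, Set.mem_preimage,
        Set.mem_singleton_iff, exists_prop]
      exact ⟨fun h => ⟨dilProj E G t ω, h, rfl⟩, fun ⟨d, hd, hdd⟩ => hdd ▸ hd⟩
    have hcellmeas' : ∀ d ∈ S.toFinite.toFinset, MeasurableSet (dilProj E G t ⁻¹' {d}) :=
      fun d _ => hm _ (cell_meas hE hG d)
    have hdisj : Set.Pairwise ↑(S.toFinite.toFinset)
        (Function.onFun Disjoint fun d => dilProj E G t ⁻¹' {d}) := by
      intro d1 _ d2 _ hne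
      refine Set.disjoint_left.mpr fun ω h1 h2 => hne ?_
      have e1 : dilProj E G t ω = d1 := h1
      have e2 : dilProj E G t ω = d2 := h2
      rw [← e1, e2]
    rw [hdecomp]
    rw [integral_biUnion_finset _ hcellmeas' hdisj (fun d _ => hgint.integrableOn)]
    rw [integral_biUnion_finset _ hcellmeas' hdisj (fun d _ => hf.integrableOn)]
    exact Finset.sum_congr rfl fun d _ => percell d

theorem universal_dilation_exists (E : Type) [Fintype E] [DecidableEq E] [Nonempty E] :
    ∃ (G : Type) (fG : Fintype G) (φ : E × G ≃ E × G),
      @UniversalDilationBody E G _ fG _ φ := by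
  classical
  refine ⟨E × (E → E), inferInstance, dilEquiv E, ?_⟩
  intro P hpos hrow
  set e₀ : E := Classical.arbitrary E
  set q : ℕ → (E × (E → E)) → ℝ :=
    fun t g => (if g.1 = e₀ then (1:ℝ) else 0) * ∏ i, P t i (g.2 i) with hqdef
  have hq0 : ∀ t g, 0 ≤ q t g := by
    intro t g
    refine mul_nonneg ?_ (Finset.prod_nonneg fun i _ => hpos t i (g.2 i))
    split <;> norm_num
  refine ⟨q, hq0, ?_, ?_, clause_aux _ q hq0⟩
  · intro t
    rw [Fintype.sum_prod_type]
    have h1 : ∀ e : E, ∑ f : E → E, q t (e, f)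
        = if e = e₀ then ∑ f : E → E, ∏ i, P t i (f i) else 0 := by
      intro e
      simp only [hqdef, ite_mul, one_mul, zero_mul]
      split <;> simp
    rw [Finset.sum_congr rfl fun e _ => h1 e, Finset.sum_ite_eq' Finset.univ e₀]
    simp [sum_prod_one (P t) (hrow t)]
  · intro t i j
    have hφ : ∀ g : E × (E → E), ((dilEquiv E) (i, g)).1 = g.2 i := fun g => rfl
    rw [Fintype.sum_prod_type]
    have h1 : ∀ e : E, (∑ f : E → E, q t (e, f)
          * (if ((dilEquiv E) (i, (e, f))).1 = j then (1:ℝ) else 0))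
        = if e = e₀ then ∑ f : E → E, (∏ i', P t i' (f i'))
            * (if f i = j then (1:ℝ) else 0) else 0 := by
      intro e
      simp only [hqdef, hφ, ite_mul, one_mul, zero_mul]
      split <;> simp
    rw [Finset.sum_congr rfl fun e _ => h1 e, Finset.sum_ite_eq' Finset.univ e₀]
    simp only [Finset.mem_univ, if_true]
    exact (marginal_sum (P t) (hrow t) i j).symm
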